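/- Let a > 0 and let p_a(y, y', t) = (e^{-t/4} / √(4πt)) · (y·y')^{1/2} · ( e^{-(log(y/y'))^2/(4t)} − e^{-(log(y·y'/a^2))^2/(4t)} ) for y, y' ≥ a and t > 0. Then p_a solves the heat equation of the operator −y^2 d^2/dy^2: for all y > a, y' > a and t > 0, ∂p_a/∂t (y, y', t) = y^2 · ∂^2 p_a/∂y^2 (y, y', t). -/

import Mathlib

/-- The Dirichlet heat kernel of the operator `−y² d²/dy²` on `L²([a,∞), y⁻²dy)`
with Dirichlet boundary condition at `y = a`. -/
noncomputable def cuspHeatKernel (a y y' t : ℝ) : ℝ :=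
  (Real.exp (-t / 4) / Real.sqrt (4 * Real.pi * t)) * Real.sqrt (y * y') *
    (Real.exp (-(Real.log (y / y')) ^ 2 / (4 * t)) -
      Real.exp (-(Real.log (y * y' / a ^ 2)) ^ 2 / (4 * t)))

lemma cusp_hasDerivAt_y (a y' t : ℝ) (ha : 0 < a) (hy' : 0 < y') (ht : 0 < t)
    {z : ℝ} (hz : 0 < z) :
    HasDerivAt (fun z : ℝ => cuspHeatKernel a z y' t)
      (Real.exp (-t / 4) / Real.sqrt (4 * Real.pi * t) *
        (y' / (2 * Real.sqrt (z * y')) *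
            (Real.exp (-Real.log (z / y') ^ 2 / (4 * t)) -
              Real.exp (-Real.log (z * y' / a ^ 2) ^ 2 / (4 * t))) +
          Real.sqrt (z * y') *
            (Real.exp (-Real.log (z / y') ^ 2 / (4 * t)) *
                (-Real.log (z / y') / (2 * t * z)) -
              Real.exp (-Real.log (z * y' / a ^ 2) ^ 2 / (4 * t)) *
                (-Real.log (z * y' / a ^ 2) / (2 * t * z))))) z := by
  have hzy' : (0:ℝ) < z * y' := mul_pos hz hy'
  have hs : HasDerivAt (fun z : ℝ => Real.sqrt (z * y')) _ z :=
    ((hasDerivAt_id z).mul_const y').sqrt hzy'.ne'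
  have hL1 : HasDerivAt (fun z : ℝ => Real.log (z / y')) _ z :=
    ((hasDerivAt_id z).div_const y').log (div_ne_zero hz.ne' hy'.ne')
  have hL2 : HasDerivAt (fun z : ℝ => Real.log (z * y' / a ^ 2)) _ z :=
    (((hasDerivAt_id z).mul_const y').div_const (a ^ 2)).log
      (div_ne_zero hzy'.ne' (by positivity))
  have hE1 : HasDerivAt (fun z : ℝ => Real.exp (-Real.log (z / y') ^ 2 / (4 * t))) _ z :=
    ((hL1.pow 2).neg.div_const (4 * t)).exp
  have hE2 : HasDerivAt (fun z : ℝ => Real.exp (-Real.log (z * y' / a ^ 2) ^ 2 / (4 * t))) _ z :=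
    ((hL2.pow 2).neg.div_const (4 * t)).exp
  have hker := ((hs.const_mul (Real.exp (-t / 4) / Real.sqrt (4 * Real.pi * t))).mul
    (hE1.sub hE2))
  have hker' : HasDerivAt (fun z : ℝ => cuspHeatKernel a z y' t) _ z := hker
  convert hker' using 1
  have hsne : Real.sqrt (z * y') ≠ 0 := by positivity
  simp only [id, Pi.sub_apply, Pi.mul_apply, Pi.neg_apply, Pi.pow_apply, Pi.div_apply, Nat.cast_ofNat]
  field_simp
  ring


/-- `p_a` solves the heat equation of the operator `−y² d²/dy²`:
`∂p_a/∂t (y, y', t) = y² ∂²p_a/∂y² (y, y', t)` for `y, y' > a`, `t > 0`. -/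
theorem cuspHeatKernel_heat_equation (a : ℝ) (ha : 0 < a) :
    ∀ y y' t : ℝ, a < y → a < y' → 0 < t →
      deriv (fun s : ℝ => cuspHeatKernel a y y' s) t =
        y ^ 2 * deriv (deriv (fun z : ℝ => cuspHeatKernel a z y' t)) y := by
  intro y y' t hy hy' ht
  have hy0 : 0 < y := ha.trans hy
  have hy'0 : 0 < y' := ha.trans hy'
  have hyy' : (0:ℝ) < y * y' := mul_pos hy0 hy'0
  -- time derivative
  have hc : HasDerivAt (fun s : ℝ => Real.exp (-s / 4)) _ t :=
    ((hasDerivAt_id t).neg.div_const 4).exp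
  have hr : HasDerivAt (fun s : ℝ => Real.sqrt (4 * Real.pi * s)) _ t :=
    ((hasDerivAt_id t).const_mul (4 * Real.pi)).sqrt (by positivity)
  have hA : HasDerivAt (fun s : ℝ => Real.exp (-Real.log (y / y') ^ 2 / (4 * s))) _ t :=
    ((hasDerivAt_const t (-Real.log (y / y') ^ 2)).div
      ((hasDerivAt_id t).const_mul 4) (by positivity)).exp
  have hB : HasDerivAt (fun s : ℝ => Real.exp (-Real.log (y * y' / a ^ 2) ^ 2 / (4 * s))) _ t :=
    ((hasDerivAt_const t (-Real.log (y * y' / a ^ 2) ^ 2)).div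
      ((hasDerivAt_id t).const_mul 4) (by positivity)).exp
  have hT := ((hc.div hr (by positivity)).mul_const (Real.sqrt (y * y'))).mul (hA.sub hB)
  have hT' : HasDerivAt (fun s : ℝ => cuspHeatKernel a y y' s) _ t := hT
  rw [hT'.deriv]
  -- first space derivative, as a function on a neighborhood
  have hEq : (deriv fun z : ℝ => cuspHeatKernel a z y' t) =ᶠ[nhds y]
      (fun z : ℝ => Real.exp (-t / 4) / Real.sqrt (4 * Real.pi * t) *
        (y' / (2 * Real.sqrt (z * y')) *
            (Real.exp (-Real.log (z / y') ^ 2 / (4 * t)) -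
              Real.exp (-Real.log (z * y' / a ^ 2) ^ 2 / (4 * t))) +
          Real.sqrt (z * y') *
            (Real.exp (-Real.log (z / y') ^ 2 / (4 * t)) *
                (-Real.log (z / y') / (2 * t * z)) -
              Real.exp (-Real.log (z * y' / a ^ 2) ^ 2 / (4 * t)) *
                (-Real.log (z * y' / a ^ 2) / (2 * t * z))))) := by
    filter_upwards [isOpen_Ioi.mem_nhds (show y ∈ Set.Ioi (0:ℝ) from hy0)] with z hz
    exact (cusp_hasDerivAt_y a y' t ha hy'0 ht hz).deriv
  rw [hEq.deriv_eq]
  -- second space derivative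
  have hs : HasDerivAt (fun z : ℝ => Real.sqrt (z * y')) _ y :=
    ((hasDerivAt_id y).mul_const y').sqrt hyy'.ne'
  have hL1 : HasDerivAt (fun z : ℝ => Real.log (z / y')) _ y :=
    ((hasDerivAt_id y).div_const y').log (div_ne_zero hy0.ne' hy'0.ne')
  have hL2 : HasDerivAt (fun z : ℝ => Real.log (z * y' / a ^ 2)) _ y :=
    (((hasDerivAt_id y).mul_const y').div_const (a ^ 2)).log
      (div_ne_zero hyy'.ne' (by positivity))
  have hE1 : HasDerivAt (fun z : ℝ => Real.exp (-Real.log (z / y') ^ 2 / (4 * t))) _ y :=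
    ((hL1.pow 2).neg.div_const (4 * t)).exp
  have hE2 : HasDerivAt (fun z : ℝ => Real.exp (-Real.log (z * y' / a ^ 2) ^ 2 / (4 * t))) _ y :=
    ((hL2.pow 2).neg.div_const (4 * t)).exp
  have hm1 : HasDerivAt (fun z : ℝ => -Real.log (z / y') / (2 * t * z)) _ y :=
    hL1.neg.div ((hasDerivAt_id y).const_mul (2 * t)) (by positivity)
  have hm2 : HasDerivAt (fun z : ℝ => -Real.log (z * y' / a ^ 2) / (2 * t * z)) _ y :=
    hL2.neg.div ((hasDerivAt_id y).const_mul (2 * t)) (by positivity)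
  have hq : HasDerivAt (fun z : ℝ => y' / (2 * Real.sqrt (z * y'))) _ y :=
    (hasDerivAt_const y y').div (hs.const_mul 2) (by positivity)
  have hD2 := (((hq.mul (hE1.sub hE2)).add
      (hs.mul ((hE1.mul hm1).sub (hE2.mul hm2)))).const_mul
      (Real.exp (-t / 4) / Real.sqrt (4 * Real.pi * t)))
  have hD2' : HasDerivAt (fun z : ℝ => Real.exp (-t / 4) / Real.sqrt (4 * Real.pi * t) *
        (y' / (2 * Real.sqrt (z * y')) *
            (Real.exp (-Real.log (z / y') ^ 2 / (4 * t)) -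
              Real.exp (-Real.log (z * y' / a ^ 2) ^ 2 / (4 * t))) +
          Real.sqrt (z * y') *
            (Real.exp (-Real.log (z / y') ^ 2 / (4 * t)) *
                (-Real.log (z / y') / (2 * t * z)) -
              Real.exp (-Real.log (z * y' / a ^ 2) ^ 2 / (4 * t)) *
                (-Real.log (z * y' / a ^ 2) / (2 * t * z))))) _ y := hD2
  rw [hD2'.deriv]
  -- algebra
  set S := Real.sqrt (y * y') with hS
  set R := Real.sqrt (4 * Real.pi * t) with hR
  have hS2 : S ^ 2 = y * y' := by rw [hS]; exact Real.sq_sqrt hyy'.le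
  have hR2 : R ^ 2 = 4 * Real.pi * t := by
    rw [hR]; exact Real.sq_sqrt (by positivity)
  have hSpos : 0 < S := by rw [hS]; positivity
  have hRpos : 0 < R := by rw [hR]; positivity
  have hy'eq : y' = S ^ 2 / y := by
    rw [hS2, mul_comm, mul_div_assoc, div_self hy0.ne', mul_one]
  have hπeq : Real.pi = R ^ 2 / (4 * t) := by rw [hR2]; field_simp
  rw [hy'eq, hπeq]
  simp only [id, Pi.sub_apply, Pi.mul_apply, Pi.neg_apply, Pi.pow_apply, Pi.div_apply, Nat.cast_ofNat]
  field_simp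
  simp only [Real.sqrt_sq hSpos.le, Real.sqrt_sq hRpos.le]
  ring
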